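/- Let M be the quotient of the free commutative monoid on the generators a, p₀, p₁, p₂, … by the smallest monoid congruence identifying p_i with p_{i+1} + a for every i ≥ 0. Then the class of a is a prime element of M, every prime element of M equals the class of a, and M is not primely generated (in particular the class of p₀ is not a finite sum of prime elements). -/

import Mathlib

/-- The algebraic preorder on a commutative monoid: `x ≤ y` iff `∃ z, y = x + z`. -/
def AlgLE {M : Type*} [AddCommMonoid M] (x y : M) : Prop := ∃ z, y = x + z

/-- A monoid is conical if `x + y = 0` implies `x = 0` and `y = 0`. -/
def IsConical (M : Type*) [AddCommMonoid M] : Prop := ∀ x y : M, x + y = 0 → x = 0 ∧ y = 0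

/-- A refinement monoid: every equality `a + b = c + d` admits a refinement. -/
def IsRefinement (M : Type*) [AddCommMonoid M] : Prop :=
  ∀ a b c d : M, a + b = c + d →
    ∃ x y z w : M, a = x + y ∧ b = z + w ∧ c = x + z ∧ d = y + w

/-- Separative: `a + a = a + b` and `b + b = a + b` imply `a = b`. -/
def IsSeparative (M : Type*) [AddCommMonoid M] : Prop :=
  ∀ a b : M, a + a = a + b → b + b = a + b → a = b

/-- A prime element: `p ≠ 0` and `p ≤ a + b` implies `p ≤ a` or `p ≤ b`
(algebraic preorder). -/
def IsPrimeElem {M : Type*} [AddCommMonoid M] (p : M) : Prop :=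
  p ≠ 0 ∧ ∀ a b : M, AlgLE p (a + b) → AlgLE p a ∨ AlgLE p b

/-- Primely generated: every element is a finite sum of prime elements. -/
def PrimelyGenerated (M : Type*) [AddCommMonoid M] : Prop :=
  ∀ x : M, ∃ l : Multiset M, (∀ p ∈ l, IsPrimeElem p) ∧ x = l.sum

/-- Antisymmetric: the algebraic preorder is a partial order. -/
def IsAntisymmetric (M : Type*) [AddCommMonoid M] : Prop :=
  ∀ x y : M, AlgLE x y → AlgLE y x → x = y

/-- A primitive monoid: an antisymmetric, primely generated refinement monoid. -/
def IsPrimitive (M : Type*) [AddCommMonoid M] : Prop :=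
  IsAntisymmetric M ∧ PrimelyGenerated M ∧ IsRefinement M

/-- The defining relations: `p_i = p_{i+1} + a` for all `i ≥ 0`, where `some i`
stands for `p_i` and `none` stands for `a`.  (The free commutative monoid on the
generators is `Multiset (Option ℕ)`.) -/
def rel6 : Multiset (Option ℕ) → Multiset (Option ℕ) → Prop :=
  fun x y => ∃ i : ℕ,
    x = ({Option.some i} : Multiset (Option ℕ)) ∧
    y = ({Option.some (i + 1)} : Multiset (Option ℕ)) + ({Option.none} : Multiset (Option ℕ))

/-- The monoid with generators `a, p₀, p₁, …` and relations `p_i = p_{i+1} + a`. -/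
abbrev M6 := (addConGen rel6).Quotient

/-- In the monoid `⟨a, p₀, p₁, … ∣ p_i = p_{i+1} + a⟩`, the class of `a` is prime,
it is the only prime element, and the monoid is not primely generated; in
particular the class of `p₀` is not a finite sum of primes. -/

def g6 : Option ℕ → ℕ × ℤ
  | none => (0, 1)
  | some i => (1, -(i : ℤ))

def F6 : Multiset (Option ℕ) →+ ℕ × ℤ where
  toFun s := (s.map g6).sum
  map_zero' := rfl
  map_add' x y := by simp

lemma c_of {x y} (h : rel6 x y) : addConGen rel6 x y := AddConGen.Rel.of x y h

lemma F6_rel {x y} (h : rel6 x y) : F6 x = F6 y := by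
  obtain ⟨i, rfl, rfl⟩ := h
  show (Multiset.map g6 {Option.some i}).sum = (Multiset.map g6 ({Option.some (i + 1)} + {Option.none})).sum
  simp [F6, g6, Prod.ext_iff]

def φ6 : M6 →+ ℕ × ℤ :=
  (addConGen rel6).lift F6 (AddCon.addConGen_le.2 fun x y h => (AddCon.ker_rel _).2 (F6_rel h))

@[simp] lemma φ6_mk (s : Multiset (Option ℕ)) : φ6 ((addConGen rel6).mk' s) = F6 s :=
  AddCon.lift_mk' _ _

local notation "cg" => addConGen rel6

lemma raise (i k : ℕ) :
    cg ({Option.some i} : Multiset (Option ℕ))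
      (({Option.some (i + k)} : Multiset (Option ℕ)) + Multiset.replicate k Option.none) := by
  induction k with
  | zero => simpa using (addConGen rel6).refl _
  | succ k ih =>
    refine (addConGen rel6).trans ih ?_
    have h1 : cg ({Option.some (i + k)} : Multiset (Option ℕ))
        (({Option.some (i + k + 1)} : Multiset (Option ℕ)) + {Option.none}) :=
      c_of ⟨i + k, rfl, rfl⟩
    have h2 := (addConGen rel6).add h1 ((addConGen rel6).refl (Multiset.replicate k Option.none))
    have e : ({Option.some (i + (k+1))} : Multiset (Option ℕ)) + Multiset.replicate (k+1) Option.none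
        = ({Option.some (i + k + 1)} : Multiset (Option ℕ)) + {Option.none} + Multiset.replicate k Option.none := by
      rw [Multiset.replicate_succ, ← Multiset.singleton_add, ← add_assoc, ← add_assoc]
    rw [e]
    exact h2

@[simp] lemma F6_singleton (x : Option ℕ) : F6 ({x} : Multiset (Option ℕ)) = g6 x := by
  show (Multiset.map g6 {x}).sum = g6 x
  simp [F6]

@[simp] lemma F6_cons (x : Option ℕ) (s : Multiset (Option ℕ)) :
    F6 (x ::ₘ s) = g6 x + F6 s := by
  show (Multiset.map g6 (x ::ₘ s)).sum = g6 x + (Multiset.map g6 s).sum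
  simp [F6]

lemma normal (s : Multiset (Option ℕ)) (N : ℕ) (hN : ∀ i, Option.some i ∈ s → i ≤ N) :
    ∃ K : ℕ,
      cg s (Multiset.replicate (F6 s).1 (Option.some N) + Multiset.replicate K Option.none) ∧
      (K : ℤ) = (F6 s).2 + (F6 s).1 * N := by
  induction s using Multiset.induction with
  | empty => exact ⟨0, by simpa [F6] using (addConGen rel6).refl 0, by simp [F6]⟩
  | cons x s ih =>
    obtain ⟨K, hK, hKv⟩ := ih (fun i hi => hN i (Multiset.mem_cons_of_mem hi))
    cases x with
    | none =>
      refine ⟨K + 1, ?_, ?_⟩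
      · have h := (addConGen rel6).add ((addConGen rel6).refl ({Option.none} : Multiset (Option ℕ))) hK
        rw [Multiset.singleton_add] at h
        have e : ({Option.none} : Multiset (Option ℕ)) +
            (Multiset.replicate (F6 s).1 (Option.some N) + Multiset.replicate K Option.none)
            = Multiset.replicate (F6 (Option.none ::ₘ s)).1 (Option.some N) +
              Multiset.replicate (K + 1) Option.none := by
          simp [g6, Multiset.replicate_succ, ← Multiset.singleton_add]
          abel_nf
        rw [← e]
        exact h
      · simp [g6, hKv]; ring
    | some i =>
      have hiN : i ≤ N := hN i (Multiset.mem_cons_self _ _)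
      refine ⟨K + (N - i), ?_, ?_⟩
      · have h := (addConGen rel6).add (raise i (N - i)) hK
        rw [Multiset.singleton_add] at h
        rw [Nat.add_sub_cancel' hiN] at h
        have e : ({Option.some N} : Multiset (Option ℕ)) + Multiset.replicate (N - i) Option.none +
            (Multiset.replicate (F6 s).1 (Option.some N) + Multiset.replicate K Option.none)
            = Multiset.replicate (F6 (Option.some i ::ₘ s)).1 (Option.some N) +
              Multiset.replicate (K + (N - i)) Option.none := by
          simp [g6, Multiset.replicate_add, Multiset.replicate_succ, ← Multiset.singleton_add,
            add_comm, Nat.add_comm]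
          abel_nf
        rw [← e]
        exact h
      · simp only [F6_cons, g6, Prod.fst_add, Prod.snd_add]
        push_cast [Nat.cast_sub hiN]
        rw [hKv]
        ring

lemma cg_of_F6_eq {s t : Multiset (Option ℕ)} (h : F6 s = F6 t) : cg s t := by
  set N : ℕ := ((s + t).map (fun o => o.getD 0)).sum with hNdef
  have hbound : ∀ u : Multiset (Option ℕ), u = s ∨ u = t → ∀ i, Option.some i ∈ u → i ≤ N := by
    rintro u hu i hi
    have hm : (i : ℕ) ∈ (s + t).map (fun o => o.getD 0) := by
      rw [Multiset.mem_map]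
      exact ⟨Option.some i, by rcases hu with rfl | rfl <;>
        simp [Multiset.mem_add, hi], rfl⟩
    exact Multiset.single_le_sum (fun x _ => Nat.zero_le x) _ hm
  obtain ⟨K, hK, hKv⟩ := normal s N (hbound s (Or.inl rfl))
  obtain ⟨K', hK', hKv'⟩ := normal t N (hbound t (Or.inr rfl))
  have hKK : K = K' := by
    have : (K : ℤ) = (K' : ℤ) := by rw [hKv, hKv', h]
    exact_mod_cast this
  rw [h, hKK] at hK
  exact (addConGen rel6).trans hK ((addConGen rel6).symm hK')

lemma φ6_inj {x y : M6} (h : φ6 x = φ6 y) : x = y := by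
  obtain ⟨s, rfl⟩ := AddCon.mk'_surjective x
  obtain ⟨t, rfl⟩ := AddCon.mk'_surjective y
  rw [φ6_mk, φ6_mk] at h
  exact (AddCon.eq _).2 (cg_of_F6_eq h)

lemma F6_fst_nonneg (s : Multiset (Option ℕ)) (h : (F6 s).1 = 0) : 0 ≤ (F6 s).2 := by
  induction s using Multiset.induction with
  | empty => simp [F6]
  | cons x s ih =>
    cases x with
    | none =>
      simp only [F6_cons, g6, Prod.fst_add, Prod.snd_add] at h ⊢
      have := ih (by omega)
      omega
    | some i => simp [g6] at h

lemma φ6_snd_nonneg (x : M6) (h : (φ6 x).1 = 0) : 0 ≤ (φ6 x).2 := by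
  obtain ⟨s, rfl⟩ := AddCon.mk'_surjective x
  rw [φ6_mk] at h ⊢
  exact F6_fst_nonneg s h

def a6 : M6 := (addConGen rel6).mk' ({Option.none} : Multiset (Option ℕ))

@[simp] lemma φ6_coe (s : Multiset (Option ℕ)) : φ6 (s : M6) = F6 s := φ6_mk s

@[simp] lemma φ6_a : φ6 a6 = (0, 1) := by simp [a6, g6]

lemma eq_zero_of_add_eq_zero {x y : M6} (h : x + y = 0) : x = 0 ∧ y = 0 := by
  have hφ : φ6 x + φ6 y = 0 := by rw [← map_add, h, map_zero]
  have h1 : (φ6 x).1 = 0 ∧ (φ6 y).1 = 0 := by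
    have := congrArg Prod.fst hφ
    simp [Prod.fst_add] at this
    omega
  have h2x := φ6_snd_nonneg x h1.1
  have h2y := φ6_snd_nonneg y h1.2
  have := congrArg Prod.snd hφ
  simp [Prod.snd_add] at this
  have h2 : (φ6 x).2 = 0 ∧ (φ6 y).2 = 0 := by omega
  constructor <;> apply φ6_inj <;> rw [map_zero]
  · exact Prod.ext h1.1 h2.1
  · exact Prod.ext h1.2 h2.2

lemma a_le_of_ne_zero {x : M6} (h : x ≠ 0) : AlgLE a6 x := by
  obtain ⟨s, rfl⟩ := AddCon.mk'_surjective x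
  have hs : s ≠ 0 := by rintro rfl; exact h (map_zero _)
  obtain ⟨y, hy⟩ := Multiset.exists_mem_of_ne_zero hs
  obtain ⟨s', rfl⟩ := Multiset.exists_cons_of_mem hy
  cases y with
  | none =>
    refine ⟨(addConGen rel6).mk' s', ?_⟩
    show _ = (addConGen rel6).mk' ({Option.none} : Multiset (Option ℕ)) + _
    rw [← map_add, ← Multiset.singleton_add]
  | some i =>
    refine ⟨(addConGen rel6).mk' ({Option.some (i+1)} : Multiset (Option ℕ)) +
      (addConGen rel6).mk' s', ?_⟩
    show _ = (addConGen rel6).mk' ({Option.none} : Multiset (Option ℕ)) + _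
    rw [← map_add, ← map_add, ← Multiset.singleton_add]
    apply ((AddCon.eq _).2)
    have h1 : cg ({Option.some i} : Multiset (Option ℕ))
        (({Option.none} : Multiset (Option ℕ)) + {Option.some (i+1)}) := by
      have := c_of (x := ({Option.some i} : Multiset (Option ℕ)))
        (y := ({Option.some (i+1)} : Multiset (Option ℕ)) + {Option.none}) ⟨i, rfl, rfl⟩
      rwa [add_comm] at this
    have := (addConGen rel6).add h1 ((addConGen rel6).refl s')
    rwa [add_assoc] at this


lemma a6_ne_zero : a6 ≠ 0 := by
  intro h
  have h2 := congrArg (fun u => (φ6 u).2) h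
  simp at h2

lemma a6_prime : IsPrimeElem a6 := by
  refine ⟨a6_ne_zero, fun x y ⟨z, hz⟩ => ?_⟩
  by_cases hx : x = 0
  · subst hx
    by_cases hy : y = 0
    · subst hy
      rw [zero_add] at hz
      exact absurd (eq_zero_of_add_eq_zero hz.symm).1 a6_ne_zero
    · exact Or.inr (a_le_of_ne_zero hy)
  · exact Or.inl (a_le_of_ne_zero hx)

@[simp] lemma F6_replicate (k : ℕ) (x : Option ℕ) :
    F6 (Multiset.replicate k x) = k • g6 x := by
  show (Multiset.map g6 (Multiset.replicate k x)).sum = k • g6 x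
  simp [F6, Multiset.map_replicate, Multiset.sum_replicate]

lemma not_le_of_fst_pos {x y : M6} (h : (φ6 y).1 < (φ6 x).1) : ¬ AlgLE x y := by
  rintro ⟨z, rfl⟩
  rw [map_add] at h
  simp only [Prod.fst_add] at h
  omega

lemma not_le_of_snd {x y : M6} (h1 : (φ6 y).1 = (φ6 x).1) (h2 : (φ6 y).2 < (φ6 x).2) :
    ¬ AlgLE x y := by
  rintro ⟨z, rfl⟩
  rw [map_add] at h1 h2
  have hz1 : (φ6 z).1 = 0 := by
    simp [Prod.fst_add] at h1
    omega
  have := φ6_snd_nonneg z hz1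
  simp [Prod.snd_add] at h2
  omega

lemma prime_unique {x : M6} (hx : IsPrimeElem x) : x = a6 := by
  obtain ⟨hne, hp⟩ := hx
  rcases hmc : φ6 x with ⟨m, c⟩
  rcases Nat.eq_zero_or_pos m with h0 | hpos
  · subst h0
    have hcnn : 0 ≤ c := by
      have := φ6_snd_nonneg x (by rw [hmc])
      rwa [hmc] at this
    have hcpos : 0 < c := by
      rcases lt_or_eq_of_le hcnn with h | h
      · exact h
      · exact absurd (φ6_inj (by rw [hmc, map_zero, ← h]; rfl)) hne
    rcases eq_or_lt_of_le (show (0:ℤ) + 1 ≤ c from hcpos) with h1 | h2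
    · exact φ6_inj (by rw [hmc, φ6_a, ← h1]; norm_num)
    · exfalso
      have hφy : φ6 ((Multiset.replicate (c - 1).toNat Option.none : Multiset (Option ℕ)) : M6)
          = (0, c - 1) := by
        rw [φ6_coe, F6_replicate]
        simp [g6, Prod.ext_iff]
        omega
      have hxy : x = a6 + ((Multiset.replicate (c - 1).toNat Option.none :
          Multiset (Option ℕ)) : M6) := by
        apply φ6_inj
        rw [map_add, φ6_a, hφy, hmc]
        exact Prod.ext (by simp) (by simp)
      rcases hp a6 ((Multiset.replicate (c - 1).toNat Option.none : Multiset (Option ℕ)) : M6)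
          ⟨0, by rw [add_zero, ← hxy]⟩ with h | h
      · exact not_le_of_snd (by rw [hmc, φ6_a]) (by rw [hmc, φ6_a]; exact h2) h
      · exact not_le_of_snd (by rw [hmc, hφy]) (by rw [hmc, hφy]; omega) h
  · exfalso
    have hφw : φ6 (((({Option.some (1 - c).toNat} : Multiset (Option ℕ)) +
        Multiset.replicate (m - 1) (Option.some 0) +
        Multiset.replicate (c - 1).toNat Option.none) : Multiset (Option ℕ)) : M6)
        = (m, c - 1) := by
      rw [φ6_coe, map_add, map_add, F6_singleton, F6_replicate, F6_replicate]
      simp [g6, Prod.ext_iff]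
      omega
    have hxw : x = (((({Option.some (1 - c).toNat} : Multiset (Option ℕ)) +
        Multiset.replicate (m - 1) (Option.some 0) +
        Multiset.replicate (c - 1).toNat Option.none) : Multiset (Option ℕ)) : M6) + a6 := by
      apply φ6_inj
      rw [map_add, φ6_a, hφw, hmc]
      exact Prod.ext (by simp) (by simp)
    rcases hp (((({Option.some (1 - c).toNat} : Multiset (Option ℕ)) +
        Multiset.replicate (m - 1) (Option.some 0) +
        Multiset.replicate (c - 1).toNat Option.none) : Multiset (Option ℕ)) : M6) a6
        ⟨0, by rw [add_zero, ← hxw]⟩ with h | h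
    · exact not_le_of_snd (by rw [hmc, hφw]) (by rw [hmc, hφw]; omega) h
    · exact not_le_of_fst_pos (by rw [hmc, φ6_a]; exact hpos) h

lemma sum_of_a6_fst (l : Multiset M6) (h : ∀ p ∈ l, p = a6) : (φ6 l.sum).1 = 0 := by
  induction l using Multiset.induction with
  | empty => simp
  | cons x l ih =>
    rw [Multiset.sum_cons, map_add, Prod.fst_add,
      h x (Multiset.mem_cons_self _ _), φ6_a,
      ih (fun p hp => h p (Multiset.mem_cons_of_mem hp))]

lemma p0_not_sum :
    ¬ ∃ l : Multiset M6, (∀ p ∈ l, IsPrimeElem p) ∧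
        (addConGen rel6).mk' ({Option.some 0} : Multiset (Option ℕ)) = l.sum := by
  rintro ⟨l, hl, hsum⟩
  have h1 : (φ6 ((addConGen rel6).mk' ({Option.some 0} : Multiset (Option ℕ)))).1 = 1 := by
    simp [g6]
  rw [hsum, sum_of_a6_fst l (fun p hp => prime_unique (hl p hp))] at h1
  exact absurd h1 (by norm_num)


theorem statement6 :
    IsPrimeElem ((addConGen rel6).mk' ({Option.none} : Multiset (Option ℕ))) ∧
    (∀ x : M6, IsPrimeElem x →
      x = (addConGen rel6).mk' ({Option.none} : Multiset (Option ℕ))) ∧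
    ¬ PrimelyGenerated M6 ∧
    ¬ ∃ l : Multiset M6, (∀ p ∈ l, IsPrimeElem p) ∧
        (addConGen rel6).mk' ({Option.some 0} : Multiset (Option ℕ)) = l.sum := by
  refine ⟨a6_prime, fun x hx => prime_unique hx, ?_, p0_not_sum⟩
  intro hpg
  exact p0_not_sum (hpg _)
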